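/- Let κ be a regular uncountable cardinal, let λ > κ be an inaccessible cardinal, and let U be a κ-complete normal fine ultrafilter on P_κ(λ). Then the set {P ∈ P_κ(λ) : λ_P is an inaccessible cardinal} belongs to U. -/

import Mathlib

open Set Cardinal

/-- The order type of a set of ordinals. -/
noncomputable def otp (S : Set Ordinal.{0}) : Ordinal.{0} :=
  sInf {α : Ordinal.{0} | Nonempty (↥S ≃o ↥(Iio α))}

/-- `P_κ(λ)`: sets `P ⊆ λ` of order type `< κ` with `P ∩ κ` an ordinal `< κ`. -/
def PklSet (κ lam : Cardinal.{0}) : Set (Set Ordinal.{0}) :=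
  {P | P ⊆ Iio lam.ord ∧ otp P < κ.ord ∧ ∃ α < κ.ord, P ∩ Iio κ.ord = Iio α}

/-- `λ_P`, the order type of `P`. -/
noncomputable def lpt (P : Set Ordinal.{0}) : Ordinal.{0} := otp P

/-- `κ_P = P ∩ κ` (as an ordinal, i.e. the order type of `P ∩ κ`). -/
noncomputable def kpt (κ : Cardinal.{0}) (P : Set Ordinal.{0}) : Ordinal.{0} :=
  otp (P ∩ Iio κ.ord)

/-- `P ≺ Q` iff `P ⊆ Q` and `λ_P < κ_Q`. -/
def Prec (κ : Cardinal.{0}) (P Q : Set Ordinal.{0}) : Prop := P ⊆ Q ∧ lpt P < kpt κ Q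

/-- `U` is `κ`-complete: closed under intersections of families of fewer than `κ` members. -/
def PklComplete (κ : Cardinal.{0}) {X : Type*} (U : Ultrafilter X) : Prop :=
  ∀ γ : Ordinal.{0}, γ.card < κ → ∀ f : ↥(Iio γ) → Set X, (∀ i, f i ∈ U) → (⋂ i, f i) ∈ U

/-- `U` is fine: for every `α < λ`, the set of `P` with `α ∈ P` is in `U`. -/
def PklFine (κ lam : Cardinal.{0}) (U : Ultrafilter ↥(PklSet κ lam)) : Prop :=
  ∀ α < lam.ord, {P : ↥(PklSet κ lam) | α ∈ P.1} ∈ U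

/-- `U` is normal: every choice function on a set in `U` is constant on a set in `U`. -/
def PklNormal (κ lam : Cardinal.{0}) (U : Ultrafilter ↥(PklSet κ lam)) : Prop :=
  ∀ A : Set ↥(PklSet κ lam), A ∈ U → ∀ f : ↥(PklSet κ lam) → Ordinal.{0},
    (∀ P ∈ A, f P ∈ P.1) → ∃ α : Ordinal.{0}, {P | P ∈ A ∧ f P = α} ∈ U

/-- An ordinal is an inaccessible cardinal. -/
def IsInaccOrd (o : Ordinal.{0}) : Prop := o.card.ord = o ∧ o.card.IsInaccessible

/-- `o` is the least inaccessible (as an ordinal) above `a`. -/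
def IsLeastInaccOrdAbove (a o : Ordinal.{0}) : Prop :=
  a < o ∧ IsInaccOrd o ∧ ∀ o', a < o' → IsInaccOrd o' → o ≤ o'

/-- `lam` is the least inaccessible cardinal above `κ`. -/
def IsLeastInaccAbove (κ lam : Cardinal.{0}) : Prop :=
  κ < lam ∧ lam.IsInaccessible ∧ ∀ μ, κ < μ → μ.IsInaccessible → lam ≤ μ

/-- A condition of the Levy collapse `Col(ν, <ρ)`, coded by its graph: a partial function
on `ν × ρ` of size `< ν` with `p(α, β) ∈ β`. -/
def IsLevyCond (ν ρ : Cardinal.{0}) (s : Set ((Ordinal.{0} × Ordinal.{0}) × Ordinal.{0})) :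
    Prop :=
  (∀ x ∈ s, x.1.1 < ν.ord ∧ x.1.2 < ρ.ord ∧ x.2 < x.1.2) ∧
  (∀ x ∈ s, ∀ y ∈ s, x.1 = y.1 → x.2 = y.2) ∧
  Cardinal.mk ↥(Prod.fst '' s) < Cardinal.lift.{1} ν

namespace OtpAux

/-- The order type of `S` computed in `Ordinal.{1}`. -/
noncomputable def ot1 (S : Set Ordinal.{0}) : Ordinal.{1} :=
  Ordinal.type (Subrel ((· < ·) : Ordinal.{0} → Ordinal.{0} → Prop) (· ∈ S))

theorem ot1_Iio (a : Ordinal.{0}) : ot1 (Iio a) = Ordinal.lift.{1} a := by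
  rw [← Ordinal.typein_ordinal a]
  rfl

/-- Convert an order iso of sets of ordinals to a rel iso of the subrels. -/
def orderIsoToSubrel {S T : Set Ordinal.{0}} (e : ↥S ≃o ↥T) :
    Subrel ((· < ·) : Ordinal.{0} → Ordinal.{0} → Prop) (· ∈ S) ≃r
      Subrel ((· < ·) : Ordinal.{0} → Ordinal.{0} → Prop) (· ∈ T) :=
  ⟨e.toEquiv, by
    intro a b
    change (e a).1 < (e b).1 ↔ a.1 < b.1
    rw [Subtype.coe_lt_coe, Subtype.coe_lt_coe]
    exact e.lt_iff_lt⟩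

/-- Convert a rel iso of the subrels to an order iso. -/
noncomputable def subrelToOrderIso {S T : Set Ordinal.{0}}
    (f : Subrel ((· < ·) : Ordinal.{0} → Ordinal.{0} → Prop) (· ∈ S) ≃r
      Subrel ((· < ·) : Ordinal.{0} → Ordinal.{0} → Prop) (· ∈ T)) : ↥S ≃o ↥T :=
  OrderIso.ofRelIsoLT ⟨f.toEquiv, by
    intro a b
    change f a < f b ↔ a < b
    rw [← Subtype.coe_lt_coe, ← Subtype.coe_lt_coe]
    exact f.map_rel_iff⟩

theorem nonempty_iso_iff (S : Set Ordinal.{0}) (a : Ordinal.{0}) :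
    Nonempty (↥S ≃o ↥(Iio a)) ↔ ot1 S = Ordinal.lift.{1} a := by
  rw [← ot1_Iio, ot1, ot1, Ordinal.type_eq]
  exact ⟨fun ⟨e⟩ => ⟨orderIsoToSubrel e⟩, fun ⟨f⟩ => ⟨subrelToOrderIso f⟩⟩

theorem otp_eq {S : Set Ordinal.{0}} {t : Ordinal.{0}}
    (h : ot1 S = Ordinal.lift.{1} t) : otp S = t := by
  have : {α : Ordinal.{0} | Nonempty (↥S ≃o ↥(Iio α))} = {t} := by
    ext α
    simp only [mem_setOf_eq, mem_singleton_iff, nonempty_iso_iff, h,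
      Ordinal.lift_inj]
    exact eq_comm
  rw [otp, this, csInf_singleton]

theorem ot1_le_of_subset {S T : Set Ordinal.{0}} (h : S ⊆ T) : ot1 S ≤ ot1 T := by
  have f : Subrel ((· < ·) : Ordinal.{0} → Ordinal.{0} → Prop) (· ∈ S) ↪r
      Subrel ((· < ·) : Ordinal.{0} → Ordinal.{0} → Prop) (· ∈ T) :=
    ⟨⟨Set.inclusion h, Set.inclusion_injective h⟩, Iff.rfl⟩
  exact f.ordinal_type_le

theorem exists_lift {S : Set Ordinal.{0}} {a : Ordinal.{0}} (hS : S ⊆ Iio a) :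
    ∃ t : Ordinal.{0}, ot1 S = Ordinal.lift.{1} t := by
  have h1 : ot1 S ≤ Ordinal.lift.{1} a := by
    rw [← ot1_Iio]; exact ot1_le_of_subset hS
  obtain ⟨t, ht⟩ := Ordinal.mem_range_lift_of_le.{0,1} h1
  exact ⟨t, ht.symm⟩

theorem lift_otp {S : Set Ordinal.{0}} {a : Ordinal.{0}} (hS : S ⊆ Iio a) :
    Ordinal.lift.{1} (otp S) = ot1 S := by
  obtain ⟨t, ht⟩ := exists_lift hS
  rw [otp_eq ht, ht]

theorem otp_Iio (a : Ordinal.{0}) : otp (Iio a) = a := otp_eq (ot1_Iio a)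

theorem otp_iso {S : Set Ordinal.{0}} {a : Ordinal.{0}} (hS : S ⊆ Iio a) :
    Nonempty (↥S ≃o ↥(Iio (otp S))) := by
  rw [nonempty_iso_iff, lift_otp hS]

theorem otp_le_of_subset {S T : Set Ordinal.{0}} {a : Ordinal.{0}}
    (hT : T ⊆ Iio a) (h : S ⊆ T) : otp S ≤ otp T := by
  rw [← Ordinal.lift_le.{1}, lift_otp (h.trans hT), lift_otp hT]
  exact ot1_le_of_subset h

theorem otp_card {S : Set Ordinal.{0}} {a : Ordinal.{0}} (hS : S ⊆ Iio a) :
    Cardinal.mk ↥S = Cardinal.lift.{1} (otp S).card := by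
  have : (ot1 S).card = Cardinal.mk ↥S := Ordinal.card_type _
  rw [← this, ← lift_otp hS, Ordinal.lift_card]

theorem iso_of_otp_eq {S T : Set Ordinal.{0}} {a b : Ordinal.{0}}
    (hS : S ⊆ Iio a) (hT : T ⊆ Iio b) (h : otp S = otp T) :
    Nonempty (↥S ≃o ↥T) := by
  have : ot1 S = ot1 T := by rw [← lift_otp hS, ← lift_otp hT, h]
  obtain ⟨f⟩ := Ordinal.type_eq.1 this
  exact ⟨subrelToOrderIso f⟩

end OtpAux

namespace OtpAux

theorem ot1_inter_Iio {S : Set Ordinal.{0}} (x : Ordinal.{0}) (hx : x ∈ S) :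
    ot1 (S ∩ Iio x) =
      Ordinal.typein (Subrel ((· < ·) : Ordinal.{0} → Ordinal.{0} → Prop) (· ∈ S)) ⟨x, hx⟩ := by
  rw [← Ordinal.type_subrel]
  exact RelIso.ordinal_type_eq
    ⟨⟨fun z => ⟨⟨z.1, z.2.1⟩, z.2.2⟩, fun w => ⟨w.1.1, ⟨w.1.2, w.2⟩⟩,
      fun z => rfl, fun w => rfl⟩, Iff.rfl⟩

theorem otp_inter_lt {S : Set Ordinal.{0}} {a : Ordinal.{0}} (hS : S ⊆ Iio a)
    {x : Ordinal.{0}} (hx : x ∈ S) : otp (S ∩ Iio x) < otp S := by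
  rw [← Ordinal.lift_lt.{1}, lift_otp (fun y hy => hS hy.1), lift_otp hS,
    ot1_inter_Iio x hx]
  exact Ordinal.typein_lt_type _ _

theorem otp_surj {S : Set Ordinal.{0}} {a : Ordinal.{0}} (hS : S ⊆ Iio a)
    {ξ : Ordinal.{0}} (hξ : ξ < otp S) :
    ∃ x, ∃ hx : x ∈ S, otp (S ∩ Iio x) = ξ := by
  have h1 : Ordinal.lift.{1} ξ < ot1 S := by
    rw [← lift_otp hS]; exact Ordinal.lift_lt.2 hξ
  obtain ⟨b, hb⟩ := Ordinal.typein_surj _ h1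
  refine ⟨b.1, b.2, otp_eq ?_⟩
  rw [ot1_inter_Iio b.1 b.2]
  convert hb

theorem otp_eq_of_iso {S T : Set Ordinal.{0}} {a b : Ordinal.{0}}
    (hS : S ⊆ Iio a) (hT : T ⊆ Iio b) (e : ↥S ≃o ↥T) : otp S = otp T := by
  rw [← Ordinal.lift_inj.{1}, lift_otp hS, lift_otp hT]
  exact RelIso.ordinal_type_eq (orderIsoToSubrel e)

end OtpAux


section Main

open OtpAux

variable {κ lam : Cardinal.{0}} {U : Ultrafilter ↥(PklSet κ lam)}

theorem uf_nonempty {X : Type*} {U : Ultrafilter X} {s : Set X} (h : s ∈ U) : s.Nonempty :=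
  Filter.nonempty_of_mem (f := (U : Filter X)) h

theorem uf_inter {X : Type*} {U : Ultrafilter X} {s t : Set X} (hs : s ∈ U) (ht : t ∈ U) :
    s ∩ t ∈ U := Filter.inter_mem (f := (U : Filter X)) hs ht

theorem press (hnorm : PklNormal κ lam U) {A : Set ↥(PklSet κ lam)} (hA : A ∈ U)
    (g : ↥(PklSet κ lam) → Ordinal.{0}) (hg : ∀ P ∈ A, g P < otp P.1) :
    ∃ δ < lam.ord, {P | P ∈ A ∧ δ ∈ P.1 ∧ g P = otp (P.1 ∩ Iio δ)} ∈ U := by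
  classical
  set f : ↥(PklSet κ lam) → Ordinal.{0} := fun P =>
    if h : P ∈ A then (otp_surj P.2.1 (hg P h)).choose else 0 with hf
  have hfP : ∀ P (h : P ∈ A), f P ∈ P.1 := fun P h => by
    simp only [hf, dif_pos h]
    exact (otp_surj P.2.1 (hg P h)).choose_spec.choose
  have hfo : ∀ P (h : P ∈ A), otp (P.1 ∩ Iio (f P)) = g P := fun P h => by
    simp only [hf, dif_pos h]
    exact (otp_surj P.2.1 (hg P h)).choose_spec.choose_spec
  obtain ⟨δ, hδU⟩ := hnorm A hA f (fun P h => hfP P h)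
  obtain ⟨P₀, hP₀A, hP₀f⟩ := uf_nonempty hδU
  have hδ : δ < lam.ord := P₀.2.1 (hP₀f ▸ hfP P₀ hP₀A)
  refine ⟨δ, hδ, Filter.mem_of_superset hδU ?_⟩
  rintro P ⟨hPA, hPf⟩
  have h1 := hfP P hPA
  have h2 := hfo P hPA
  rw [hPf] at h1 h2
  exact ⟨hPA, h1, h2.symm⟩

theorem small_mem (hcomp : PklComplete κ U) (hfine : PklFine κ lam U)
    {γ : Ordinal.{0}} (hγ : γ < lam.ord) (hcard : γ.card < κ) :
    {P : ↥(PklSet κ lam) | Iio γ ⊆ P.1} ∈ U := by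
  have h := hcomp γ hcard (fun i => {P | i.1 ∈ P.1})
    (fun i => hfine i.1 (i.2.trans hγ))
  convert h using 1
  ext P
  simp only [mem_iInter, mem_setOf_eq]
  exact ⟨fun h i => h i.2, fun h x hx => h ⟨x, hx⟩⟩

theorem noInj (hlam : lam.IsInaccessible) (hnorm : PklNormal κ lam U)
    (hfine : PklFine κ lam U) {A : Set ↥(PklSet κ lam)} (hA : A ∈ U)
    {δ : Ordinal.{0}} (hδ : δ < lam.ord)
    (hj : ∀ P, P ∈ A → ∃ j : ↥(P.1) → Ordinal.{0},
      (∀ x, j x ∈ P.1 ∩ Iio δ) ∧ Function.Injective j) : False := by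
  classical
  set k : Ordinal.{0} → ↥(PklSet κ lam) → Ordinal.{0} := fun α P =>
    if h : P ∈ A ∧ α ∈ P.1 then (hj P h.1).choose ⟨α, h.2⟩ else 0 with hk
  have hkmem : ∀ α P (h : P ∈ A ∧ α ∈ P.1), k α P ∈ P.1 ∩ Iio δ := fun α P h => by
    simp only [hk, dif_pos h]
    exact (hj P h.1).choose_spec.1 _
  have hAα : ∀ α, α < lam.ord → A ∩ {P | α ∈ P.1} ∈ U := fun α hα =>
    uf_inter hA (hfine α hα)
  have key : ∀ α, α < lam.ord → ∃ c : Ordinal.{0},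
      {P | P ∈ A ∩ {P | α ∈ P.1} ∧ k α P = c} ∈ U := fun α hα =>
    hnorm _ (hAα α hα) (k α) (fun P h => (hkmem α P ⟨h.1, h.2⟩).1)
  set G : Ordinal.{0} → Ordinal.{0} := fun α =>
    if hα : α < lam.ord then (key α hα).choose else 0 with hG
  have hBα : ∀ α (hα : α < lam.ord),
      {P | P ∈ A ∩ {P | α ∈ P.1} ∧ k α P = G α} ∈ U := fun α hα => by
    simp only [hG, dif_pos hα]
    exact (key α hα).choose_spec
  have hGδ : ∀ α (hα : α < lam.ord), G α < δ := fun α hα => by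
    obtain ⟨P, hP1, hP2⟩ := uf_nonempty (hBα α hα)
    rw [← hP2]
    exact (hkmem α P ⟨hP1.1, hP1.2⟩).2
  have hGinj : InjOn G (Iio lam.ord) := by
    intro α hα β hβ hab
    by_contra hne
    obtain ⟨P, hPα, hPβ⟩ :=
      uf_nonempty (uf_inter (hBα α hα) (hBα β hβ))
    have h1 : k α P = G α := hPα.2
    have h2 : k β P = G β := hPβ.2
    have hPA : P ∈ A := hPα.1.1
    have hαP : α ∈ P.1 := hPα.1.2
    have hβP : β ∈ P.1 := hPβ.1.2
    have e1 : k α P = (hj P hPA).choose ⟨α, hαP⟩ := by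
      simp only [hk, dif_pos (And.intro hPA hαP)]
    have e2 : k β P = (hj P hPA).choose ⟨β, hβP⟩ := by
      simp only [hk, dif_pos (And.intro hPA hβP)]
    have : (hj P hPA).choose ⟨α, hαP⟩ = (hj P hPA).choose ⟨β, hβP⟩ := by
      rw [← e1, ← e2, h1, h2, hab]
    have := (hj P hPA).choose_spec.2 this
    exact hne (congrArg Subtype.val this)
  -- cardinality contradiction
  have hemb : Function.Injective
      (fun a : ↥(Iio lam.ord) => (⟨G a.1, hGδ a.1 a.2⟩ : ↥(Iio δ))) := by
    intro a b hab
    exact Subtype.ext (hGinj a.2 b.2 (congrArg Subtype.val hab))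
  have hle : (Cardinal.mk ↥(Iio lam.ord)) ≤ Cardinal.mk ↥(Iio δ) :=
    Cardinal.mk_le_of_injective hemb
  rw [Ordinal.mk_Iio_ordinal, Ordinal.mk_Iio_ordinal, Cardinal.lift_le,
    Cardinal.card_ord] at hle
  exact absurd (Cardinal.lt_ord.1 hδ) (not_lt.2 hle)

theorem diffs_nonempty {s t : Set Ordinal.{0}} (h : s ≠ t) : ((s \ t) ∪ (t \ s)).Nonempty := by
  by_contra hne
  rw [Set.not_nonempty_iff_eq_empty, Set.union_empty_iff] at hne
  exact h (Set.Subset.antisymm (Set.diff_eq_empty.1 hne.1) (Set.diff_eq_empty.1 hne.2))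

theorem noSetInj (hlam : lam.IsInaccessible) (hnorm : PklNormal κ lam U)
    (hfine : PklFine κ lam U) {A : Set ↥(PklSet κ lam)} (hA : A ∈ U)
    {δ : Ordinal.{0}} (hδ : δ < lam.ord)
    (hj : ∀ P, P ∈ A → ∃ j : ↥(P.1) → Set Ordinal.{0},
      (∀ x, j x ⊆ P.1 ∩ Iio δ) ∧ Function.Injective j) : False := by
  classical
  set k : Ordinal.{0} → ↥(PklSet κ lam) → Set Ordinal.{0} := fun α P =>
    if h : P ∈ A ∧ α ∈ P.1 then (hj P h.1).choose ⟨α, h.2⟩ else ∅ with hk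
  have hksub : ∀ α P, k α P ⊆ P.1 ∩ Iio δ := fun α P => by
    by_cases h : P ∈ A ∧ α ∈ P.1
    · simp only [hk, dif_pos h]; exact (hj P h.1).choose_spec.1 _
    · simp only [hk, dif_neg h]; exact empty_subset _
  set G : Ordinal.{0} → Set Ordinal.{0} := fun α =>
    {ξ | {P | P ∈ A ∧ ξ ∈ k α P} ∈ U} with hG
  have hGsub : ∀ α, G α ⊆ Iio δ := by
    intro α ξ hξ
    obtain ⟨P, _, hP2⟩ := uf_nonempty hξ
    exact (hksub α P hP2).2
  have hGinj : InjOn G (Iio lam.ord) := by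
    intro α hα β hβ hab
    by_contra hne
    have hW : A ∩ ({P | α ∈ P.1} ∩ {P | β ∈ P.1}) ∈ U :=
      uf_inter hA (uf_inter (hfine α hα) (hfine β hβ))
    have hkne : ∀ P (h : P ∈ A ∩ ({P | α ∈ P.1} ∩ {P | β ∈ P.1})),
        k α P ≠ k β P := by
      intro P h hcon
      have e1 : k α P = (hj P h.1).choose ⟨α, h.2.1⟩ := by
        rw [hk]; exact dif_pos ⟨h.1, h.2.1⟩
      have e2 : k β P = (hj P h.1).choose ⟨β, h.2.2⟩ := by
        rw [hk]; exact dif_pos ⟨h.1, h.2.2⟩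
      rw [e1, e2] at hcon
      have := (hj P h.1).choose_spec.2 hcon
      exact hne (congrArg Subtype.val this)
    set d : ↥(PklSet κ lam) → Ordinal.{0} := fun P =>
      if h : P ∈ A ∩ ({P | α ∈ P.1} ∩ {P | β ∈ P.1}) then
        (diffs_nonempty (hkne P h)).choose else 0 with hd
    have hdmem : ∀ P (h : P ∈ A ∩ ({P | α ∈ P.1} ∩ {P | β ∈ P.1})),
        d P ∈ (k α P \ k β P) ∪ (k β P \ k α P) := fun P h => by
      simp only [hd, dif_pos h]
      exact (diffs_nonempty (hkne P h)).choose_spec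
    have hdP : ∀ P (h : P ∈ A ∩ ({P | α ∈ P.1} ∩ {P | β ∈ P.1})), d P ∈ P.1 := by
      intro P h
      rcases hdmem P h with h' | h'
      · exact (hksub α P h'.1).1
      · exact (hksub β P h'.1).1
    obtain ⟨ξ₀, hB⟩ := hnorm _ hW d (fun P h => hdP P h)
    set B := {P | P ∈ A ∩ ({P | α ∈ P.1} ∩ {P | β ∈ P.1}) ∧ d P = ξ₀} with hBdef
    have hsplit : B ⊆ (B ∩ {P | ξ₀ ∈ k α P ∧ ξ₀ ∉ k β P}) ∪
        (B ∩ {P | ξ₀ ∈ k β P ∧ ξ₀ ∉ k α P}) := by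
      intro P hP
      have := hdmem P hP.1
      rw [hP.2] at this
      rcases this with h' | h'
      · exact Or.inl ⟨hP, h'.1, h'.2⟩
      · exact Or.inr ⟨hP, h'.1, h'.2⟩
    have hU2 : (B ∩ {P | ξ₀ ∈ k α P ∧ ξ₀ ∉ k β P}) ∪
        (B ∩ {P | ξ₀ ∈ k β P ∧ ξ₀ ∉ k α P}) ∈ U :=
      Filter.mem_of_superset hB hsplit
    have final : ∀ (γ γ' : Ordinal.{0}), γ < lam.ord → γ' < lam.ord → G γ = G γ' →
        (B ∩ {P | ξ₀ ∈ k γ P ∧ ξ₀ ∉ k γ' P}) ∈ U → False := by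
      intro γ γ' hγ hγ' hGeq hV
      have h1 : {P | P ∈ A ∧ ξ₀ ∈ k γ P} ∈ U :=
        Filter.mem_of_superset hV (fun P hP => ⟨hP.1.1.1, hP.2.1⟩)
      have h2 : ξ₀ ∈ G γ := h1
      rw [hGeq] at h2
      obtain ⟨P, hPV, hPg⟩ := uf_nonempty (uf_inter hV h2)
      exact hPV.2.2 hPg.2
    rcases (Ultrafilter.union_mem_iff.1 hU2) with hV | hV
    · exact final α β hα hβ hab hV
    · exact final β α hβ hα hab.symm hV
  -- cardinality contradiction
  have hemb : Function.Injective
      (fun a : ↥(Iio lam.ord) => (⟨G a.1, hGsub a.1⟩ : ↥(𝒫 (Iio δ)))) := by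
    intro a b hab
    exact Subtype.ext (hGinj a.2 b.2 (congrArg Subtype.val hab))
  have hle : (Cardinal.mk ↥(Iio lam.ord)) ≤ Cardinal.mk ↥(𝒫 (Iio δ)) :=
    Cardinal.mk_le_of_injective hemb
  rw [Ordinal.mk_Iio_ordinal, Cardinal.mk_powerset, Ordinal.mk_Iio_ordinal,
    ← Cardinal.lift_two_power, Cardinal.lift_le, Cardinal.card_ord] at hle
  exact absurd (hlam.isStrongPrelimit (Cardinal.lt_ord.1 hδ)) (not_lt.2 hle)

theorem notCard (hlam : lam.IsInaccessible) (hnorm : PklNormal κ lam U)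
    (hfine : PklFine κ lam U)
    (hC : {P : ↥(PklSet κ lam) | (otp P.1).card.ord ≠ otp P.1} ∈ U) : False := by
  classical
  have hg : ∀ P ∈ {P : ↥(PklSet κ lam) | (otp P.1).card.ord ≠ otp P.1},
      (otp P.1).card.ord < otp P.1 := fun P hP =>
    lt_of_le_of_ne (Cardinal.ord_card_le _) hP
  obtain ⟨δ, hδ, hB⟩ := press hnorm hC (fun P => (otp P.1).card.ord) hg
  refine noInj hlam hnorm hfine hB hδ ?_
  intro P hP
  have hcards : Cardinal.mk ↥(P.1 ∩ Iio δ) = Cardinal.mk ↥P.1 := by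
    rw [otp_card (S := P.1 ∩ Iio δ) (a := lam.ord) (fun y hy => P.2.1 hy.1), otp_card P.2.1, ← hP.2.2,
      Cardinal.card_ord]
  obtain ⟨e⟩ := (Cardinal.le_def _ _).1 hcards.ge
  exact ⟨fun x => (e x).1, fun x => (e x).2, fun x y hxy =>
    e.injective (Subtype.coe_injective hxy)⟩

theorem notCtble (hkl : κ < lam) (huncount : ℵ₀ < κ) (hlam : lam.IsInaccessible)
    (hcomp : PklComplete κ U) (hnorm : PklNormal κ lam U) (hfine : PklFine κ lam U)
    (hC : {P : ↥(PklSet κ lam) | ¬ ℵ₀ < (otp P.1).card} ∈ U) : False := by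
  classical
  have hωcard : (Ordinal.omega0 : Ordinal.{0}).card < κ := by
    rw [Ordinal.card_omega0]; exact huncount
  have hωlt : (Ordinal.omega0 : Ordinal.{0}) < lam.ord := by
    rw [Cardinal.lt_ord, Ordinal.card_omega0]; exact huncount.trans hkl
  have hA : {P : ↥(PklSet κ lam) | ¬ ℵ₀ < (otp P.1).card} ∩
      {P | Iio Ordinal.omega0 ⊆ P.1} ∈ U :=
    uf_inter hC (small_mem hcomp hfine hωlt hωcard)
  refine noInj hlam hnorm hfine hA hωlt ?_
  intro P hP
  have hle : Cardinal.mk ↥P.1 ≤ Cardinal.mk ↥(Iio (Ordinal.omega0 : Ordinal.{0})) := by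
    rw [otp_card P.2.1, Ordinal.mk_Iio_ordinal, Ordinal.card_omega0, Cardinal.lift_le]
    exact not_lt.1 hP.1
  obtain ⟨e⟩ := (Cardinal.le_def _ _).1 hle
  refine ⟨fun x => (e x).1, fun x => ⟨hP.2 (e x).2, (e x).2⟩, fun x y hxy =>
    e.injective (Subtype.coe_injective hxy)⟩

theorem notSL (hlam : lam.IsInaccessible) (hnorm : PklNormal κ lam U)
    (hfine : PklFine κ lam U)
    (hmost : {P : ↥(PklSet κ lam) | ℵ₀ < (otp P.1).card} ∈ U)
    (hC : {P : ↥(PklSet κ lam) | ¬ (otp P.1).card.IsStrongLimit} ∈ U) : False := by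
  classical
  set A := {P : ↥(PklSet κ lam) | ℵ₀ < (otp P.1).card} ∩
    {P : ↥(PklSet κ lam) | ¬ (otp P.1).card.IsStrongLimit} with hAdef
  have hA : A ∈ U := uf_inter hmost hC
  have hex : ∀ P (h : P ∈ A), ∃ x : Cardinal.{0}, x < (otp P.1).card ∧
      (otp P.1).card ≤ 2 ^ x := by
    intro P h
    have hne : (otp P.1).card ≠ 0 := (aleph0_pos.trans h.1).ne'
    by_contra hcon
    push_neg at hcon
    exact h.2 ⟨hne, fun x hx => hcon x hx⟩
  set g : ↥(PklSet κ lam) → Ordinal.{0} := fun P =>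
    if h : P ∈ A then ((hex P h).choose).ord else 0 with hgdef
  have hg : ∀ P ∈ A, g P < otp P.1 := by
    intro P h
    have h1 := (hex P h).choose_spec.1
    have : g P = ((hex P h).choose).ord := dif_pos h
    rw [this]
    exact lt_of_lt_of_le (Cardinal.ord_lt_ord.2 h1) (Cardinal.ord_card_le _)
  obtain ⟨δ, hδ, hB⟩ := press hnorm hA g hg
  refine noSetInj hlam hnorm hfine hB hδ ?_
  intro P hP
  have hPA : P ∈ A := hP.1
  have hgP : g P = ((hex P hPA).choose).ord := dif_pos hPA
  have hx := (hex P hPA).choose_spec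
  -- #P.1 ≤ 2 ^ #(P.1 ∩ Iio δ)
  have hcard2 : Cardinal.mk ↥(P.1 ∩ Iio δ) = Cardinal.lift.{1} (hex P hPA).choose := by
    rw [otp_card (S := P.1 ∩ Iio δ) (a := lam.ord) (fun y hy => P.2.1 hy.1), ← hP.2.2, hgP, Cardinal.card_ord]
  have hle : Cardinal.mk ↥P.1 ≤ 2 ^ Cardinal.mk ↥(P.1 ∩ Iio δ) := by
    rw [otp_card P.2.1, hcard2, ← Cardinal.lift_two_power, Cardinal.lift_le]
    exact hx.2
  rw [← Cardinal.mk_set] at hle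
  obtain ⟨e⟩ := (Cardinal.le_def _ _).1 hle
  refine ⟨fun x => Subtype.val '' (e x), fun x => Subtype.coe_image_subset _ _,
    fun x y hxy => e.injective ((Subtype.coe_injective.image_injective) hxy)⟩

theorem notRegAux (hlam : lam.IsInaccessible) (hnorm : PklNormal κ lam U)
    (hfine : PklFine κ lam U)
    (hcardmost : {P : ↥(PklSet κ lam) | (otp P.1).card.ord = otp P.1} ∈ U)
    (huncmost : {P : ↥(PklSet κ lam) | ℵ₀ < (otp P.1).card} ∈ U)
    (hC : {P : ↥(PklSet κ lam) | ¬ (otp P.1).card.IsRegular} ∈ U) : False := by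
  classical
  set A := ({P : ↥(PklSet κ lam) | (otp P.1).card.ord = otp P.1} ∩
    {P : ↥(PklSet κ lam) | ℵ₀ < (otp P.1).card}) ∩
    {P : ↥(PklSet κ lam) | ¬ (otp P.1).card.IsRegular} with hAdef
  have hA : A ∈ U := uf_inter (uf_inter hcardmost huncmost) hC
  -- for each P ∈ A, a cofinal subset of small order type
  have exC : ∀ P, P ∈ A → ∃ C : Set Ordinal.{0}, C ⊆ P.1 ∧
      (∀ y ∈ P.1, ∃ x ∈ C, y ≤ x) ∧ otp C < otp P.1 := by
    intro P h
    obtain ⟨⟨hco, hℵ⟩, hnr⟩ := h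
    set o := otp P.1 with hodef
    have hcof : o.cof < o.card := by
      by_contra hcon
      refine hnr ⟨hℵ.le, ?_⟩
      rw [hco]
      exact not_lt.1 hcon
    obtain ⟨ι, f, hlsub, hmk⟩ := Ordinal.exists_lsub_cof o
    set R : Set Ordinal.{0} := range f with hRdef
    have hRsub : R ⊆ Iio o := by
      rintro _ ⟨i, rfl⟩
      rw [← hlsub]
      exact Ordinal.lt_lsub f i
    have hRunb : ∀ η, η < o → ∃ ξ ∈ R, η ≤ ξ := by
      intro η hη
      rw [← hlsub] at hη
      obtain ⟨i, hi⟩ := Ordinal.lt_lsub_iff.1 hη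
      exact ⟨f i, mem_range_self i, hi⟩
    have hotpR : otp R < o := by
      have h1 : Cardinal.lift.{1} (otp R).card ≤ Cardinal.lift.{1} o.cof := by
        rw [← otp_card hRsub, ← hmk]
        have := Cardinal.mk_range_le_lift (f := f)
        simpa using this
      rw [Cardinal.lift_le] at h1
      have h2 : (otp R).card < o.card := h1.trans_lt hcof
      calc otp R < o.card.ord := Cardinal.lt_ord.2 h2
        _ = o := hco
    obtain ⟨e⟩ := otp_iso P.2.1
    set C : Set Ordinal.{0} :=
      {x | ∃ hx : x ∈ P.1, ((e ⟨x, hx⟩ : ↥(Iio (otp P.1))) : Ordinal.{0}) ∈ R} with hCdef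
    have hCsub : C ⊆ P.1 := by rintro x ⟨hx, -⟩; exact hx
    refine ⟨C, hCsub, ?_, ?_⟩
    · -- unbounded
      intro y hy
      obtain ⟨ξ, hξR, hηξ⟩ := hRunb (e ⟨y, hy⟩).1 (e ⟨y, hy⟩).2
      have hξo : ξ < otp P.1 := hRsub hξR
      refine ⟨(e.symm ⟨ξ, hξo⟩).1, ⟨(e.symm ⟨ξ, hξo⟩).2, ?_⟩, ?_⟩
      · rw [OrderIso.apply_symm_apply]
        exact hξR
      · have h3 : e ⟨y, hy⟩ ≤ (⟨ξ, hξo⟩ : ↥(Iio (otp P.1))) := hηξ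
        have h4 := e.symm.monotone h3
        rw [OrderIso.symm_apply_apply] at h4
        exact h4
    · -- otp C = otp R < o
      have hiso : Nonempty (↥R ≃o ↥C) := by
        refine ⟨⟨⟨fun w => ⟨(e.symm ⟨w.1, hRsub w.2⟩).1,
            (e.symm ⟨w.1, hRsub w.2⟩).2, by rw [OrderIso.apply_symm_apply]; exact w.2⟩,
          fun z => ⟨(e ⟨z.1, z.2.choose⟩).1, z.2.choose_spec⟩, ?_, ?_⟩, ?_⟩⟩
        · intro w
          apply Subtype.ext
          simp only []
          rw [OrderIso.apply_symm_apply]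
        · intro z
          apply Subtype.ext
          simp only []
          rw [OrderIso.symm_apply_apply]
        · intro w w'
          simp only [Equiv.coe_fn_mk, Subtype.mk_le_mk, ← Subtype.coe_le_coe.symm]
          rw [OrderIso.le_iff_le, Subtype.mk_le_mk]
          exact Subtype.coe_le_coe
      obtain ⟨e'⟩ := hiso
      rw [← otp_eq_of_iso hRsub (hCsub.trans P.2.1) e']
      exact hotpR
  -- press down the order type of the cofinal set
  set g : ↥(PklSet κ lam) → Ordinal.{0} := fun P =>
    if h : P ∈ A then otp (exC P h).choose else 0 with hgdef
  have hg : ∀ P ∈ A, g P < otp P.1 := by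
    intro P h
    have : g P = otp (exC P h).choose := dif_pos h
    rw [this]
    exact (exC P h).choose_spec.2.2
  obtain ⟨δ, hδ, hB⟩ := press hnorm hA g hg
  set Bs := {P | P ∈ A ∧ δ ∈ P.1 ∧ g P = otp (P.1 ∩ Iio δ)} with hBsdef
  -- the isomorphism between P ∩ δ and the cofinal set
  have hm : ∀ P (h : P ∈ Bs), Nonempty (↥(P.1 ∩ Iio δ) ≃o ↥(exC P h.1).choose) := by
    intro P h
    apply iso_of_otp_eq (a := lam.ord) (b := lam.ord)
      (fun y hy => P.2.1 hy.1) (((exC P h.1).choose_spec.1).trans P.2.1)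
    have e0 : g P = otp (exC P h.1).choose := dif_pos h.1
    exact h.2.2.symm.trans e0
  set m : ∀ P (h : P ∈ Bs), ↥(P.1 ∩ Iio δ) ≃o ↥(exC P h.1).choose :=
    fun P h => (hm P h).some with hmdef
  -- the pressed-down values indexed by ξ < δ
  have keyξ : ∀ ξ (hξ : ξ < δ), ∃ c : Ordinal.{0},
      {P | P ∈ Bs ∩ {P | ξ ∈ P.1} ∧
        (if h : P ∈ Bs ∧ ξ ∈ P.1 then (m P h.1 ⟨ξ, ⟨h.2, hξ⟩⟩).1 else 0) = c} ∈ U := by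
    intro ξ hξ
    refine hnorm _ (uf_inter hB (hfine ξ (hξ.trans hδ))) _ ?_
    intro P h
    rw [dif_pos (⟨h.1, h.2⟩ : P ∈ Bs ∧ ξ ∈ P.1)]
    exact (exC P h.1.1).choose_spec.1 (m P h.1 ⟨ξ, ⟨h.2, hξ⟩⟩).2
  set G : Ordinal.{0} → Ordinal.{0} := fun ξ =>
    if hξ : ξ < δ then (keyξ ξ hξ).choose else 0 with hGdef
  have hBξ : ∀ ξ (hξ : ξ < δ),
      {P | P ∈ Bs ∩ {P | ξ ∈ P.1} ∧
        (if h : P ∈ Bs ∧ ξ ∈ P.1 then (m P h.1 ⟨ξ, ⟨h.2, hξ⟩⟩).1 else 0) = G ξ} ∈ U := by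
    intro ξ hξ
    have h2 : G ξ = (keyξ ξ hξ).choose := dif_pos hξ
    rw [h2]
    exact (keyξ ξ hξ).choose_spec
  have hGlt : ∀ ξ (hξ : ξ < δ), G ξ < lam.ord := by
    intro ξ hξ
    obtain ⟨P, hP1, hP2⟩ := uf_nonempty (hBξ ξ hξ)
    rw [← hP2, dif_pos (⟨hP1.1, hP1.2⟩ : P ∈ Bs ∧ ξ ∈ P.1)]
    exact P.2.1 ((exC P hP1.1.1).choose_spec.1 (m P hP1.1 ⟨ξ, ⟨hP1.2, hξ⟩⟩).2)
  -- cofinality of the G ξ in lam.ord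
  have hcofinal : ∀ β, β < lam.ord → ∃ ξ, ∃ hξ : ξ < δ, β ≤ G ξ := by
    intro β hβ
    set A' := Bs ∩ {P | β ∈ P.1} with hA'def
    have hA' : A' ∈ U := uf_inter hB (hfine β hβ)
    have hub : ∀ P (h : P ∈ A'), ∃ x ∈ (exC P h.1.1).choose, β ≤ x := fun P h =>
      (exC P h.1.1).choose_spec.2.1 β h.2
    set f1 : ↥(PklSet κ lam) → Ordinal.{0} := fun P =>
      if h : P ∈ A' then (hub P h).choose else 0 with hf1def
    have hf1 : ∀ P (h : P ∈ A'), f1 P ∈ (exC P h.1.1).choose ∧ β ≤ f1 P := by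
      intro P h
      have e1 : f1 P = (hub P h).choose := dif_pos h
      rw [e1]
      exact ⟨(hub P h).choose_spec.1, (hub P h).choose_spec.2⟩
    obtain ⟨x₀, hB1⟩ := hnorm A' hA' f1
      (fun P h => (exC P h.1.1).choose_spec.1 (hf1 P h).1)
    set B1 := {P | P ∈ A' ∧ f1 P = x₀} with hB1def
    have hx₀mem : ∀ P (h : P ∈ B1), x₀ ∈ (exC P h.1.1.1).choose := by
      intro P h
      exact Set.mem_of_eq_of_mem h.2.symm (hf1 P h.1).1
    have hx₀β : β ≤ x₀ := by
      obtain ⟨P, hP⟩ := uf_nonempty hB1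
      exact le_of_le_of_eq (hf1 P hP.1).2 hP.2
    set f2 : ↥(PklSet κ lam) → Ordinal.{0} := fun P =>
      if h : P ∈ B1 then ((m P h.1.1).symm ⟨x₀, hx₀mem P h⟩).1 else 0 with hf2def
    have hf2 : ∀ P (h : P ∈ B1), f2 P ∈ P.1 ∩ Iio δ := by
      intro P h
      have e1 : f2 P = ((m P h.1.1).symm ⟨x₀, hx₀mem P h⟩).1 := dif_pos h
      rw [e1]
      exact ((m P h.1.1).symm ⟨x₀, hx₀mem P h⟩).2
    obtain ⟨ξ₀, hB2⟩ := hnorm B1 hB1 f2 (fun P h => (hf2 P h).1)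
    set B2 := {P | P ∈ B1 ∧ f2 P = ξ₀} with hB2def
    have hξ₀δ : ξ₀ < δ := by
      obtain ⟨P, hP⟩ := uf_nonempty hB2
      exact (Set.mem_of_eq_of_mem hP.2.symm (hf2 P hP.1)).2
    refine ⟨ξ₀, hξ₀δ, ?_⟩
    obtain ⟨P, hPB2, hPBξ⟩ := uf_nonempty (uf_inter hB2 (hBξ ξ₀ hξ₀δ))
    have hPB1 : P ∈ B1 := hPB2.1
    have hPBs : P ∈ Bs := hPB1.1.1
    have hξ₀P : ξ₀ ∈ P.1 := by
      exact (Set.mem_of_eq_of_mem hPB2.2.symm (hf2 P hPB1)).1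
    -- f2 P = ξ₀ means m.symm x₀ = ξ₀, so m ξ₀ = x₀
    have e2 : ((m P hPBs).symm ⟨x₀, hx₀mem P hPB1⟩).1 = ξ₀ := by
      have e1 : f2 P = ((m P hPBs).symm ⟨x₀, hx₀mem P hPB1⟩).1 := dif_pos hPB1
      rw [← e1, hPB2.2]
    have e3 : (m P hPBs).symm ⟨x₀, hx₀mem P hPB1⟩ =
        (⟨ξ₀, ⟨hξ₀P, hξ₀δ⟩⟩ : ↥(P.1 ∩ Iio δ)) := Subtype.ext e2
    have e4 : (⟨x₀, hx₀mem P hPB1⟩ : ↥(exC P hPBs.1).choose) =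
        m P hPBs ⟨ξ₀, ⟨hξ₀P, hξ₀δ⟩⟩ := by
      rw [← e3, OrderIso.apply_symm_apply]
    have e5 : G ξ₀ = (m P hPBs ⟨ξ₀, ⟨hξ₀P, hξ₀δ⟩⟩).1 := by
      rw [← hPBξ.2, dif_pos (⟨hPBs, hξ₀P⟩ : P ∈ Bs ∧ ξ₀ ∈ P.1)]
    rw [e5, ← e4]
    exact hx₀β
  -- contradiction with regularity of lam
  set G' : δ.ToType → Ordinal.{0} :=
    fun i => G (((Ordinal.ToType.mk (o := δ)).symm i).1) with hG'def
  have hG'lt : ∀ i, G' i < lam.ord := fun i =>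
    hGlt _ ((Ordinal.ToType.mk (o := δ)).symm i).2
  have hsup : iSup G' < lam.ord := by
    apply Ordinal.iSup_lt_ord _ hG'lt
    rw [Cardinal.mk_toType, hlam.isRegular.cof_ord]
    exact Cardinal.lt_ord.1 hδ
  have hlim : Order.IsSuccLimit lam.ord := Cardinal.isSuccLimit_ord hlam.aleph0_lt.le
  obtain ⟨ξ, hξ, hβG⟩ := hcofinal (Order.succ (iSup G')) (hlim.succ_lt hsup)
  have e6 : G ξ = G' (Ordinal.ToType.mk (o := δ) ⟨ξ, hξ⟩) := by
    rw [hG'def]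
    simp only [OrderIso.symm_apply_apply]
  have e7 : G' (Ordinal.ToType.mk (o := δ) ⟨ξ, hξ⟩) ≤ iSup G' :=
    Ordinal.le_iSup G' _
  rw [e6] at hβG
  exact absurd (hβG.trans e7) (Order.succ_le_iff.not.2 (by simp))

end Main


/-- If `κ` is regular uncountable, `λ > κ` inaccessible, and `U` a `κ`-complete
normal fine ultrafilter on `P_κ(λ)`, then `{P : λ_P is inaccessible}` belongs to `U`. -/
theorem lambdaP_inaccessible_set_mem
    (κ lam : Cardinal.{0}) (hreg : κ.IsRegular) (huncount : ℵ₀ < κ)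
    (hkl : κ < lam) (hlam : lam.IsInaccessible)
    (U : Ultrafilter ↥(PklSet κ lam))
    (hcomp : PklComplete κ U) (hnorm : PklNormal κ lam U) (hfine : PklFine κ lam U) :
    {P : ↥(PklSet κ lam) | IsInaccOrd (lpt P.1)} ∈ U := by
  by_contra hT
  have hTc : {P : ↥(PklSet κ lam) | IsInaccOrd (lpt P.1)}ᶜ ∈ U :=
    Ultrafilter.compl_mem_iff_notMem.2 hT
  have hnC1 : {P : ↥(PklSet κ lam) | (otp P.1).card.ord ≠ otp P.1} ∉ U :=
    fun h => notCard hlam hnorm hfine h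
  have hnC2 : {P : ↥(PklSet κ lam) | ¬ ℵ₀ < (otp P.1).card} ∉ U :=
    fun h => notCtble hkl huncount hlam hcomp hnorm hfine h
  have hC1c : {P : ↥(PklSet κ lam) | (otp P.1).card.ord = otp P.1} ∈ U := by
    have := (Ultrafilter.compl_mem_iff_notMem (s :=
      {P : ↥(PklSet κ lam) | (otp P.1).card.ord ≠ otp P.1})).2 hnC1
    convert this using 1
    ext P
    simp [not_not]
  have hC2c : {P : ↥(PklSet κ lam) | ℵ₀ < (otp P.1).card} ∈ U := by
    have := (Ultrafilter.compl_mem_iff_notMem (s :=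
      {P : ↥(PklSet κ lam) | ¬ ℵ₀ < (otp P.1).card})).2 hnC2
    convert this using 1
    ext P
    simp [not_not]
  have hnC3 : {P : ↥(PklSet κ lam) | ¬ (otp P.1).card.IsRegular} ∉ U :=
    fun h => notRegAux hlam hnorm hfine hC1c hC2c h
  have hnC4 : {P : ↥(PklSet κ lam) | ¬ (otp P.1).card.IsStrongLimit} ∉ U :=
    fun h => notSL hlam hnorm hfine hC2c h
  have hdecomp : {P : ↥(PklSet κ lam) | IsInaccOrd (lpt P.1)}ᶜ ⊆
      {P : ↥(PklSet κ lam) | (otp P.1).card.ord ≠ otp P.1} ∪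
      ({P : ↥(PklSet κ lam) | ¬ ℵ₀ < (otp P.1).card} ∪
      ({P : ↥(PklSet κ lam) | ¬ (otp P.1).card.IsRegular} ∪
       {P : ↥(PklSet κ lam) | ¬ (otp P.1).card.IsStrongLimit})) := by
    intro P hP
    by_contra h
    simp only [mem_union, mem_setOf_eq, not_or, not_not] at h
    exact hP ⟨h.1, ⟨h.2.1, h.2.2.1.2, h.2.2.2.isStrongPrelimit⟩⟩
  have hun := Filter.mem_of_superset hTc hdecomp
  rcases Ultrafilter.union_mem_iff.1 hun with h | h
  · exact hnC1 h
  rcases Ultrafilter.union_mem_iff.1 h with h | h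
  · exact hnC2 h
  rcases Ultrafilter.union_mem_iff.1 h with h | h
  · exact hnC3 h
  · exact hnC4 h
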